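/- Let p ∈ (0,1), q = 1-p, and suppose the barrier satisfies liminf_{n→∞} b_n/n > q/p. Then ∑_{n ≥ 0} f(n) · p^{n+1} · q^{b_{n+1}+1} < 1 - q^{b_0+1}, i.e., the inequality of the probabilistic theorem is strict. -/

import Mathlib

/-- The number of nondecreasing sequences `0 ≤ a 0 ≤ ⋯ ≤ a n` below the barrier `b`. -/
noncomputable def barrierSeqCount (b : ℕ → ℕ) (n : ℕ) : ℕ :=
  Nat.card {a : Fin (n + 1) → ℕ // Monotone a ∧ ∀ i, a i ≤ b i.1}

open Finset

open scoped Classical in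
noncomputable def admF (b : ℕ → ℕ) (n : ℕ) : Finset (Fin (n + 1) → ℕ) :=
  (Fintype.piFinset fun i : Fin (n + 1) => Finset.range (b i.1 + 1)).filter fun a => Monotone a

lemma mem_admF {b : ℕ → ℕ} {n : ℕ} {a : Fin (n + 1) → ℕ} :
    a ∈ admF b n ↔ Monotone a ∧ ∀ i, a i ≤ b i.1 := by
  classical
  simp [admF, Fintype.mem_piFinset, Nat.lt_succ_iff, and_comm]

lemma card_admF (b : ℕ → ℕ) (n : ℕ) : (admF b n).card = barrierSeqCount b n := by
  rw [barrierSeqCount, ← Nat.card_eq_finsetCard]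
  exact Nat.card_congr (Equiv.subtypeEquivRight fun a => mem_admF.symm).symm

/-- Weighted sum over admissible sequences. -/
noncomputable def UU (q : ℝ) (b : ℕ → ℕ) (n : ℕ) : ℝ :=
  ∑ a ∈ admF b n, q ^ (a (Fin.last n))

lemma UU_zero (q : ℝ) (b : ℕ → ℕ) : UU q b 0 = ∑ m ∈ range (b 0 + 1), q ^ m := by
  refine Finset.sum_nbij' (fun a => a 0) (fun m => fun _ => m) ?_ ?_ ?_ ?_ ?_
  · intro a ha
    simp only [mem_range, Nat.lt_succ_iff]
    exact (mem_admF.1 ha).2 0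
  · intro m hm
    refine mem_admF.2 ⟨monotone_const, fun i => ?_⟩
    have : i = 0 := Fin.ext (by omega)
    simpa [this] using Nat.lt_succ_iff.1 (mem_range.1 hm)
  · intro a _
    funext i
    have : i = 0 := Fin.ext (by omega)
    simp [this]
  · intro m _; rfl
  · intro a _
    have : Fin.last 0 = 0 := rfl
    rw [this]

lemma monotone_snoc {n : ℕ} {a : Fin (n + 1) → ℕ} {m : ℕ} (ha : Monotone a)
    (hm : a (Fin.last n) ≤ m) : Monotone (Fin.snoc a m : Fin (n + 2) → ℕ) := by
  rw [Fin.monotone_iff_le_succ]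
  intro i
  refine Fin.lastCases ?_ (fun j => ?_) i
  · simpa [Fin.succ_last, Fin.snoc_castSucc, Fin.snoc_last] using hm
  · rw [Fin.succ_castSucc, Fin.snoc_castSucc, Fin.snoc_castSucc]
    exact ha (Fin.castSucc_lt_succ : j.castSucc < j.succ).le

lemma UU_succ (q : ℝ) {b : ℕ → ℕ} (hb : Monotone b) (n : ℕ) :
    UU q b (n + 1) = ∑ a ∈ admF b n, ∑ j ∈ Icc (a (Fin.last n)) (b (n + 1)), q ^ j := by
  have : ∑ a ∈ admF b n, ∑ j ∈ Icc (a (Fin.last n)) (b (n + 1)), q ^ j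
      = ∑ x ∈ (admF b n).sigma (fun a => Icc (a (Fin.last n)) (b (n + 1))), q ^ x.2 :=
    (Finset.sum_sigma _ _ (fun x => q ^ x.2)).symm
  rw [this, UU]
  refine Finset.sum_nbij' (fun a => ⟨Fin.init a, a (Fin.last (n + 1))⟩)
    (fun x => Fin.snoc x.1 x.2) ?_ ?_ ?_ ?_ ?_
  · intro a ha
    obtain ⟨hmono, hbd⟩ := mem_admF.1 ha
    refine Finset.mem_sigma.2 ⟨mem_admF.2 ⟨?_, ?_⟩, ?_⟩
    · exact fun i j hij => hmono (Fin.castSucc_le_castSucc_iff.2 hij)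
    · intro i; exact hbd i.castSucc
    · refine Finset.mem_Icc.2 ⟨?_, ?_⟩
      · exact hmono (Fin.le_last _)
      · exact hbd (Fin.last (n + 1))
  · rintro ⟨x, m⟩ hx
    obtain ⟨hx1, hx2⟩ := Finset.mem_sigma.1 hx
    obtain ⟨hmono, hbd⟩ := mem_admF.1 hx1
    obtain ⟨hm1, hm2⟩ := Finset.mem_Icc.1 hx2
    refine mem_admF.2 ⟨monotone_snoc hmono hm1, ?_⟩
    intro i
    refine Fin.lastCases ?_ (fun j => ?_) i
    · simpa [Fin.snoc_last] using hm2
    · simpa [Fin.snoc_castSucc] using hbd j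
  · intro a _; exact Fin.snoc_init_self a
  · rintro ⟨x, m⟩ _
    simp [Fin.init_snoc, Fin.snoc_last]
  · intro a _
    simp [Fin.snoc_last]

lemma UU_step {q p : ℝ} (hq1 : q ≠ 1) (hpq : p = 1 - q) {b : ℕ → ℕ} (hb : Monotone b) (n : ℕ) :
    p * UU q b (n + 1) = UU q b n - (admF b n).card * q ^ (b (n + 1) + 1) := by
  rw [UU_succ q hb n, Finset.mul_sum]
  have key : ∀ a ∈ admF b n, p * ∑ j ∈ Icc (a (Fin.last n)) (b (n + 1)), q ^ j
      = q ^ (a (Fin.last n)) - q ^ (b (n + 1) + 1) := by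
    intro a ha
    have hle : a (Fin.last n) ≤ b (n + 1) :=
      le_trans (by simpa using (mem_admF.1 ha).2 (Fin.last n)) (hb (by omega))
    rw [← Finset.Ico_add_one_right_eq_Icc, geom_sum_Ico hq1 (by omega)]
    have hq1' : q - 1 ≠ 0 := sub_ne_zero.2 hq1
    field_simp [hpq]
    rw [hpq]; ring
  rw [Finset.sum_congr rfl key, Finset.sum_sub_distrib, Finset.sum_const, UU]
  push_cast
  ring

lemma partial_sum {q p : ℝ} (hq1 : q ≠ 1) (hpq : p = 1 - q) {b : ℕ → ℕ} (hb : Monotone b)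
    (N : ℕ) :
    ∑ n ∈ range N, ((admF b n).card : ℝ) * p ^ (n + 1) * q ^ (b (n + 1) + 1)
      = (1 - q ^ (b 0 + 1)) - p ^ (N + 1) * UU q b N := by
  induction N with
  | zero =>
    simp only [range_zero, Finset.sum_empty, UU_zero]
    rw [geom_sum_eq hq1]
    have hq1' : q - 1 ≠ 0 := sub_ne_zero.2 hq1
    field_simp [hpq]
    rw [hpq]; ring
  | succ N ih =>
    rw [Finset.sum_range_succ, ih]
    have h := UU_step hq1 hpq hb N
    have h2 : p ^ (N + 1 + 1) * UU q b (N + 1) = p ^ (N + 1) * (p * UU q b (N + 1)) := by ring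
    rw [h2, h]
    ring

lemma one_le_UU {q : ℝ} (hq0 : 0 ≤ q) (b : ℕ → ℕ) (n : ℕ) : (1 : ℝ) ≤ UU q b n := by
  have hmem : (fun _ => 0 : Fin (n + 1) → ℕ) ∈ admF b n :=
    mem_admF.2 ⟨monotone_const, fun i => Nat.zero_le _⟩
  have := Finset.single_le_sum (f := fun a : Fin (n + 1) → ℕ => q ^ (a (Fin.last n)))
    (fun a _ => pow_nonneg hq0 _) hmem
  simpa [UU] using this

lemma UU_restrict {q : ℝ} (hq0 : 0 ≤ q) (b : ℕ → ℕ) (L M : ℕ) :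
    UU q (fun j => b (L + 1 + j)) M ≤ UU q b (L + M + 1) := by
  set b' : ℕ → ℕ := fun j => b (L + 1 + j) with hb'
  set φ : (Fin (M + 1) → ℕ) → (Fin (L + M + 1 + 1) → ℕ) :=
    fun a i => if h : L + 1 ≤ i.1 then a ⟨i.1 - (L + 1), by omega⟩ else 0 with hφ
  have hφ_eval : ∀ (a : Fin (M + 1) → ℕ) (j : Fin (M + 1)),
      φ a ⟨L + 1 + j.1, by omega⟩ = a j := by
    intro a j
    simp only [hφ]
    rw [dif_pos (by omega)]
    congr 1
    exact Fin.ext (by simp)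
  have hinj : ∀ a₁ ∈ admF b' M, ∀ a₂ ∈ admF b' M, φ a₁ = φ a₂ → a₁ = a₂ := by
    intro a₁ _ a₂ _ h
    funext j
    have := congrFun h ⟨L + 1 + j.1, by omega⟩
    rwa [hφ_eval, hφ_eval] at this
  have hsub : (admF b' M).image φ ⊆ admF b (L + M + 1) := by
    intro c hc
    obtain ⟨a, ha, rfl⟩ := Finset.mem_image.1 hc
    obtain ⟨hmono, hbd⟩ := mem_admF.1 ha
    refine mem_admF.2 ⟨?_, ?_⟩
    · intro i j hij
      have hij' : i.1 ≤ j.1 := hij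
      simp only [hφ]
      by_cases hi : L + 1 ≤ i.1 <;> by_cases hj : L + 1 ≤ j.1
      · rw [dif_pos hi, dif_pos hj]
        exact hmono (by simp [Fin.le_def]; omega)
      · omega
      · rw [dif_neg hi, dif_pos hj]; exact Nat.zero_le _
      · rw [dif_neg hi, dif_neg hj]
    · intro i
      simp only [hφ]
      by_cases hi : L + 1 ≤ i.1
      · rw [dif_pos hi]
        have := hbd ⟨i.1 - (L + 1), by omega⟩
        simp only [hb'] at this
        have he : L + 1 + (i.1 - (L + 1)) = i.1 := by omega
        rwa [he] at this
      · rw [dif_neg hi]; exact Nat.zero_le _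
  calc UU q b' M = ∑ a ∈ admF b' M, q ^ (a (Fin.last M)) := rfl
    _ = ∑ c ∈ (admF b' M).image φ, q ^ (c (Fin.last (L + M + 1))) := by
        rw [Finset.sum_image hinj]
        refine Finset.sum_congr rfl fun a _ => ?_
        have : φ a (Fin.last (L + M + 1)) = a (Fin.last M) := by
          have h1 : (Fin.last (L + M + 1)) = (⟨L + 1 + (Fin.last M).1, by simp; omega⟩ : Fin (L + M + 1 + 1)) := by
            exact Fin.ext (by simp; omega)
          rw [h1, hφ_eval]
        rw [this]
    _ ≤ UU q b (L + M + 1) :=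
        Finset.sum_le_sum_of_subset_of_nonneg hsub (fun _ _ _ => pow_nonneg hq0 _)

lemma card_admF_le {b : ℕ → ℕ} (hb : Monotone b) (n : ℕ) :
    (admF b n).card ≤ (b n + (n + 1)).choose (n + 1) := by
  classical
  set ψ : (Fin (n + 1) → ℕ) → Finset ℕ :=
    fun a => Finset.image (fun i : Fin (n + 1) => a i + i.1) Finset.univ with hψ
  have hsm : ∀ a ∈ admF b n, StrictMono (fun i : Fin (n + 1) => a i + i.1) := by
    intro a ha i j hij
    have h1 : a i ≤ a j := (mem_admF.1 ha).1 hij.le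
    have h2 : i.1 < j.1 := hij
    show a i + i.1 < a j + j.1
    omega
  have hcard : ∀ a ∈ admF b n, (ψ a).card = n + 1 := by
    intro a ha
    rw [hψ, Finset.card_image_of_injective _ (hsm a ha).injective, Finset.card_univ,
      Fintype.card_fin]
  have hmapsto : ∀ a ∈ admF b n, ψ a ∈ Finset.powersetCard (n + 1) (Finset.range (b n + n + 1)) := by
    intro a ha
    refine Finset.mem_powersetCard.2 ⟨?_, hcard a ha⟩
    intro x hx
    obtain ⟨i, _, rfl⟩ := Finset.mem_image.1 hx
    have h1 : a i ≤ b i.1 := (mem_admF.1 ha).2 i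
    have h2 : b i.1 ≤ b n := hb (by omega)
    have h3 : i.1 ≤ n := by omega
    exact Finset.mem_range.2 (by omega)
  have hinj : Set.InjOn ψ (admF b n) := by
    intro a₁ h₁ a₂ h₂ heq
    have e₁ := Finset.orderEmbOfFin_unique (hcard a₁ h₁)
      (fun x => Finset.mem_image_of_mem _ (Finset.mem_univ x)) (hsm a₁ h₁)
    have e₂ := Finset.orderEmbOfFin_unique (s := ψ a₁) (f := fun i : Fin (n + 1) => a₂ i + i.1)
      (hcard a₁ h₁)
      (fun x => by rw [heq, hψ]; exact Finset.mem_image_of_mem _ (Finset.mem_univ x)) (hsm a₂ h₂)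
    funext i
    have h := (congrFun e₁ i).trans (congrFun e₂ i).symm
    have h' : a₁ i + i.1 = a₂ i + i.1 := h
    omega
  calc (admF b n).card ≤ (Finset.powersetCard (n + 1) (Finset.range (b n + n + 1))).card :=
        Finset.card_le_card_of_injOn ψ hmapsto hinj
    _ = (b n + (n + 1)).choose (n + 1) := by
        rw [Finset.card_powersetCard, Finset.card_range, ← add_assoc]

lemma choose_bound {x : ℝ} (hx0 : 0 ≤ x) (hx1 : x ≤ 1) (k B : ℕ) :
    ((k + B).choose B : ℝ) * x ^ B * (1 - x) ^ k ≤ 1 := by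
  have h1x : (0 : ℝ) ≤ 1 - x := by linarith
  have hmem : B ∈ Finset.range (k + B + 1) := Finset.mem_range.2 (by omega)
  have hle := Finset.single_le_sum
    (f := fun j => x ^ j * (1 - x) ^ (k + B - j) * ((k + B).choose j : ℝ))
    (fun j _ => by positivity) hmem
  calc ((k + B).choose B : ℝ) * x ^ B * (1 - x) ^ k
      = x ^ B * (1 - x) ^ (k + B - B) * ((k + B).choose B : ℝ) := by
        rw [Nat.add_sub_cancel]; ring
    _ ≤ ∑ j ∈ Finset.range (k + B + 1), x ^ j * (1 - x) ^ (k + B - j) * ((k + B).choose j : ℝ) := hle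
    _ = (x + (1 - x)) ^ (k + B) := (add_pow x (1 - x) (k + B)).symm
    _ = 1 := by norm_num

lemma choose_swap (k B : ℕ) : (k + B).choose k = (k + B).choose B := by
  have h := Nat.choose_symm (Nat.le_add_right k B)
  rw [Nat.add_sub_cancel_left] at h
  exact h.symm

set_option maxHeartbeats 1000000 in
theorem stmt_12 (b : ℕ → ℕ) (hb : Monotone b) (p : ℝ) (hp : p ∈ Set.Ioo (0 : ℝ) 1)
    (q : ℝ) (hq : q = 1 - p)
    (hθ : ((q / p : ℝ) : EReal) <
      Filter.liminf (fun n : ℕ => (((b n : ℝ) / n : ℝ) : EReal)) Filter.atTop) :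
    ∑' n : ℕ, (barrierSeqCount b n : ℝ) * p ^ (n + 1) * q ^ (b (n + 1) + 1) <
      1 - q ^ (b 0 + 1) := by
  obtain ⟨hp0, hp1⟩ := hp
  have hq0 : 0 < q := by rw [hq]; linarith
  have hq1 : q < 1 := by rw [hq]; linarith
  have hpq : p = 1 - q := by rw [hq]; ring
  -- extract θ and N0
  obtain ⟨θ, hθl, hθr⟩ := EReal.lt_iff_exists_real_btwn.1 hθ
  have hθ1 : q / p < θ := by exact_mod_cast hθl
  have hθpos : 0 < θ := lt_trans (div_pos hq0 hp0) hθ1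
  have hev : ∀ᶠ n : ℕ in Filter.atTop, (θ : EReal) < (((b n : ℝ) / n : ℝ) : EReal) :=
    Filter.eventually_lt_of_lt_liminf hθr
  obtain ⟨N0', hN0'⟩ := Filter.eventually_atTop.1 hev
  set N0 := max N0' 1 with hN0def
  have hbound : ∀ n, N0 ≤ n → θ * n ≤ (b n : ℝ) := by
    intro n hn
    have h1 : (θ : EReal) < (((b n : ℝ) / n : ℝ) : EReal) :=
      hN0' n (le_trans (le_max_left _ _) hn)
    have h2 : θ < (b n : ℝ) / n := by exact_mod_cast h1
    have hn1 : (1 : ℝ) ≤ (n : ℝ) := by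
      have : 1 ≤ n := le_trans (le_max_right _ _) hn
      exact_mod_cast this
    have hnpos : (0 : ℝ) < (n : ℝ) := by linarith
    have := (mul_lt_mul_of_pos_right h2 hnpos).le
    calc θ * n ≤ ((b n : ℝ) / n) * n := this
      _ = (b n : ℝ) := by field_simp
  -- choose t, x, y, z, ρ
  have hθp : 0 < θ * p - q := by
    have := (div_lt_iff₀ hp0).1 hθ1
    nlinarith
  have h1θ : (0 : ℝ) < 1 + θ := by linarith
  set t : ℝ := min ((θ * p - q) / (1 + θ)) (min p q) / 2 with ht
  have ht0 : 0 < t := by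
    apply div_pos _ (by norm_num)
    exact lt_min (div_pos hθp h1θ) (lt_min hp0 hq0)
  have htp2 : t ≤ p / 2 := by
    rw [ht]
    have : min ((θ * p - q) / (1 + θ)) (min p q) ≤ p := le_trans (min_le_right _ _) (min_le_left _ _)
    linarith
  have hpt : 0 < p - t := by linarith
  have htkey : t * (1 + θ) < θ * p - q := by
    have h1 : t < (θ * p - q) / (1 + θ) := by
      rw [ht]
      have := min_le_left ((θ * p - q) / (1 + θ)) (min p q)
      have hpos := div_pos hθp h1θ
      linarith
    calc t * (1 + θ) < ((θ * p - q) / (1 + θ)) * (1 + θ) := by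
          exact mul_lt_mul_of_pos_right h1 h1θ
      _ = θ * p - q := by field_simp
  have hqt : (0 : ℝ) < q + t := by linarith
  have hx1 : q + t < 1 := by rw [hpq] at *; linarith
  set y : ℝ := q / (q + t) with hy
  have hy0 : 0 < y := div_pos hq0 hqt
  have hy1 : y < 1 := by rw [hy, div_lt_one hqt]; linarith
  set z : ℝ := y ^ θ with hz
  have hz0 : 0 < z := Real.rpow_pos_of_pos hy0 θ
  have hz1 : z < 1 := Real.rpow_lt_one hy0.le hy1 hθpos
  set u : ℝ := θ * t / (q + t) with hu
  have hu0 : 0 < u := div_pos (mul_pos hθpos ht0) hqt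
  have hzle : z ≤ 1 / (1 + u) := by
    have hlog : Real.log y ≤ -(t / (q + t)) := by
      have h1 := Real.log_le_sub_one_of_pos hy0
      have h2 : y - 1 = -(t / (q + t)) := by
        rw [hy]; field_simp; ring
      linarith
    have h1 : z = Real.exp (Real.log y * θ) := Real.rpow_def_of_pos hy0 θ
    have h2 : Real.log y * θ ≤ -u := by
      rw [hu]
      have := mul_le_mul_of_nonneg_right hlog hθpos.le
      calc Real.log y * θ ≤ -(t / (q + t)) * θ := this
        _ = -(θ * t / (q + t)) := by ring
    have h3 : z ≤ Real.exp (-u) := by rw [h1]; exact Real.exp_le_exp.2 h2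
    have h4 : 1 + u ≤ Real.exp u := by linarith [Real.add_one_le_exp u]
    have h5 : Real.exp (-u) ≤ 1 / (1 + u) := by
      rw [Real.exp_neg, one_div]
      exact inv_anti₀ (by linarith) h4
    linarith
  set ρ : ℝ := p / (p - t) * z with hρ
  have hρ0 : 0 < ρ := mul_pos (div_pos hp0 hpt) hz0
  have hρ1 : ρ < 1 := by
    have key : p < (p - t) * (1 + u) := by
      have h6 : t * (q + t) < (p - t) * θ * t := by nlinarith
      have h7 : t < (p - t) * θ * t / (q + t) := (lt_div_iff₀ hqt).2 (by linarith)
      have expand : (p - t) * (1 + u) = (p - t) + (p - t) * θ * t / (q + t) := by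
        rw [hu]; field_simp
      linarith
    have h8 : ρ ≤ p / (p - t) * (1 / (1 + u)) :=
      mul_le_mul_of_nonneg_left hzle (le_of_lt (div_pos hp0 hpt))
    have h9 : p / (p - t) * (1 / (1 + u)) = p / ((p - t) * (1 + u)) := by
      field_simp
    have h10 : p / ((p - t) * (1 + u)) < 1 :=
      (div_lt_one (by positivity)).2 key
    linarith
  -- the exponent comparison lemma
  have hyz : ∀ (m B : ℕ), θ * m ≤ (B : ℝ) → y ^ B ≤ z ^ m := by
    intro m B h
    have h1 : y ^ B = y ^ ((B : ℕ) : ℝ) := (Real.rpow_natCast y B).symm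
    have h2 : y ^ ((B : ℕ) : ℝ) ≤ y ^ (θ * m) :=
      Real.rpow_le_rpow_of_exponent_ge hy0 hy1.le h
    have h3 : y ^ (θ * m) = z ^ m := by
      rw [hz, ← Real.rpow_natCast (y ^ θ) m, ← Real.rpow_mul hy0.le]
    calc y ^ B = y ^ ((B : ℕ) : ℝ) := h1
      _ ≤ y ^ (θ * m) := h2
      _ = z ^ m := h3
  -- choose L
  have h1ρ : (0 : ℝ) < 1 - ρ := by linarith
  have hinvρ : (0 : ℝ) < 1 + 1 / (1 - ρ) := by
    have := div_pos one_pos h1ρ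
    linarith
  have hhalfpos : (0 : ℝ) < (1 / 2) / (1 + 1 / (1 - ρ)) := div_pos (by norm_num) hinvρ
  obtain ⟨n₁, hn₁⟩ := exists_pow_lt_of_lt_one hhalfpos hz1
  set L := max n₁ N0 with hL
  have hLN0 : N0 ≤ L + 1 := le_trans (le_max_right n₁ N0) (Nat.le_succ L)
  have hzL : z ^ (L + 1) * (1 + 1 / (1 - ρ)) ≤ 1 / 2 := by
    have h1 : z ^ (L + 1) ≤ z ^ n₁ :=
      pow_le_pow_of_le_one hz0.le hz1.le (le_trans (le_max_left n₁ N0) (by omega))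
    have h2 : (0 : ℝ) < 1 + 1 / (1 - ρ) := hinvρ
    have h3 : z ^ (L + 1) * (1 + 1 / (1 - ρ)) ≤ z ^ n₁ * (1 + 1 / (1 - ρ)) :=
      mul_le_mul_of_nonneg_right h1 h2.le
    have h4 : z ^ n₁ * (1 + 1 / (1 - ρ)) < ((1 / 2) / (1 + 1 / (1 - ρ))) * (1 + 1 / (1 - ρ)) :=
      mul_lt_mul_of_pos_right hn₁ h2
    have h5 : ((1 / 2) / (1 + 1 / (1 - ρ))) * (1 + 1 / (1 - ρ)) = 1 / 2 := by
      field_simp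
    linarith
  -- the shifted barrier
  set b' : ℕ → ℕ := fun j => b (L + 1 + j) with hb'def
  have hb' : Monotone b' := fun i j hij => hb (by omega)
  -- single term bound for the shifted barrier
  have hterm : ∀ n : ℕ, ((admF b' n).card : ℝ) * p ^ (n + 1) * q ^ (b' (n + 1) + 1)
      ≤ z ^ (L + 1) * ρ ^ (n + 1) := by
    intro n
    set k := n + 1 with hk
    set B := b' (n + 1) + 1 with hB
    have hcard : ((admF b' n).card : ℝ) ≤ ((k + B).choose B : ℝ) := by
      have h1 := card_admF_le hb' n
      have h2 : (b' n + (n + 1)).choose (n + 1) ≤ (k + B).choose k := by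
        rw [add_comm k B]
        apply Nat.choose_le_choose
        have : b' n ≤ b' (n + 1) := hb' (by omega)
        omega
      rw [choose_swap] at h2
      exact_mod_cast le_trans h1 h2
    have hxb : ((k + B).choose B : ℝ) * (q + t) ^ B * (p - t) ^ k ≤ 1 := by
      have h1x : p - t = 1 - (q + t) := by rw [hpq]; ring
      rw [h1x]
      exact choose_bound (by linarith) hx1.le k B
    have hid : ((k + B).choose B : ℝ) * p ^ k * q ^ B
        = ((p / (p - t)) ^ k * y ^ B) * (((k + B).choose B : ℝ) * (q + t) ^ B * (p - t) ^ k) := by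
      rw [hy, div_pow, div_pow]
      field_simp
    have hmain : ((k + B).choose B : ℝ) * p ^ k * q ^ B ≤ (p / (p - t)) ^ k * y ^ B := by
      rw [hid]
      have hnn : (0 : ℝ) ≤ (p / (p - t)) ^ k * y ^ B := by positivity
      nlinarith [hxb, hnn]
    have hyB : y ^ B ≤ z ^ (L + 1 + k) := by
      apply hyz
      have he : L + 1 + k = L + 1 + (n + 1) := by rw [hk]
      have hBval : B = b (L + 1 + (n + 1)) + 1 := by rw [hB, hb'def]
      have h1 : θ * ((L + 1 + k : ℕ) : ℝ) ≤ (b (L + 1 + k) : ℝ) := hbound _ (by omega)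
      have h2 : (b (L + 1 + k) : ℝ) ≤ (B : ℝ) := by
        rw [he, hBval]
        push_cast
        linarith
      linarith
    have hfinal : (p / (p - t)) ^ k * y ^ B ≤ z ^ (L + 1) * ρ ^ k := by
      have h1 : (p / (p - t)) ^ k * y ^ B ≤ (p / (p - t)) ^ k * z ^ (L + 1 + k) :=
        mul_le_mul_of_nonneg_left hyB (by positivity)
      have h2 : (p / (p - t)) ^ k * z ^ (L + 1 + k) = z ^ (L + 1) * ρ ^ k := by
        rw [hρ, mul_pow, pow_add]
        ring
      linarith
    have hterm1 : ((admF b' n).card : ℝ) * p ^ k * q ^ B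
        ≤ ((k + B).choose B : ℝ) * p ^ k * q ^ B := by
      have := mul_le_mul_of_nonneg_right (mul_le_mul_of_nonneg_right hcard
        (by positivity : (0:ℝ) ≤ p ^ k)) (by positivity : (0:ℝ) ≤ q ^ B)
      linarith
    calc ((admF b' n).card : ℝ) * p ^ (n + 1) * q ^ (b' (n + 1) + 1)
        = ((admF b' n).card : ℝ) * p ^ k * q ^ B := by rw [hk, hB]
      _ ≤ ((k + B).choose B : ℝ) * p ^ k * q ^ B := hterm1
      _ ≤ (p / (p - t)) ^ k * y ^ B := hmain
      _ ≤ z ^ (L + 1) * ρ ^ k := hfinal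
  -- lower bound for the shifted survival probability
  have hlow : ∀ M : ℕ, (1 : ℝ) / 2 ≤ p ^ (M + 1) * UU q b' M := by
    intro M
    have hps := partial_sum (q := q) (p := p) hq1.ne hpq hb' M
    have hsum : ∑ n ∈ range M, ((admF b' n).card : ℝ) * p ^ (n + 1) * q ^ (b' (n + 1) + 1)
        ≤ z ^ (L + 1) * (1 / (1 - ρ)) := by
      have h1 : ∑ n ∈ range M, ((admF b' n).card : ℝ) * p ^ (n + 1) * q ^ (b' (n + 1) + 1)
          ≤ ∑ n ∈ range M, z ^ (L + 1) * ρ ^ (n + 1) :=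
        Finset.sum_le_sum fun n _ => hterm n
      have h2 : ∑ n ∈ range M, z ^ (L + 1) * ρ ^ (n + 1)
          = z ^ (L + 1) * (ρ * ∑ n ∈ range M, ρ ^ n) := by
        rw [Finset.mul_sum, Finset.mul_sum]
        congr 1
        funext n
        ring
      have h3 : ∑ n ∈ range M, ρ ^ n ≤ 1 / (1 - ρ) := by
        rw [geom_sum_eq hρ1.ne]
        have e : (ρ ^ M - 1) / (ρ - 1) = (1 - ρ ^ M) / (1 - ρ) := by
          rw [div_eq_div_iff (sub_ne_zero.2 hρ1.ne) h1ρ.ne']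
          ring
        rw [e, div_le_div_iff₀ h1ρ h1ρ]
        nlinarith [pow_pos hρ0 M]
      have h4 : z ^ (L + 1) * (ρ * ∑ n ∈ range M, ρ ^ n) ≤ z ^ (L + 1) * (1 / (1 - ρ)) := by
        apply mul_le_mul_of_nonneg_left _ (by positivity)
        have h5 : ρ * ∑ n ∈ range M, ρ ^ n ≤ ρ * (1 / (1 - ρ)) :=
          mul_le_mul_of_nonneg_left h3 hρ0.le
        have h6 : ρ * (1 / (1 - ρ)) ≤ 1 * (1 / (1 - ρ)) :=
          mul_le_mul_of_nonneg_right hρ1.le (by positivity)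
        linarith
      linarith
    have hq0' : q ^ (b' 0 + 1) ≤ z ^ (L + 1) := by
      have h1 : q ^ (b' 0 + 1) ≤ y ^ (b' 0 + 1) := by
        apply pow_le_pow_left₀ hq0.le _ _
        rw [hy, le_div_iff₀ hqt]
        nlinarith
      have h2 : y ^ (b' 0 + 1) ≤ z ^ (L + 1) := by
        apply hyz
        have h3 : θ * ((L + 1 : ℕ) : ℝ) ≤ (b (L + 1) : ℝ) := hbound _ hLN0
        have h4 : b' 0 = b (L + 1) := by rw [hb'def]
        rw [h4]
        push_cast at h3 ⊢
        linarith
      linarith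
    rw [hps] at *
    nlinarith [hzL, hsum, hq0']
  -- global lower bound
  have hUlb : ∀ N : ℕ, (1 : ℝ) / 2 * p ^ (L + 1) ≤ p ^ (N + 1) * UU q b N := by
    intro N
    rcases le_or_gt N L with hNL | hNL
    · have h1 : p ^ (L + 1) ≤ p ^ (N + 1) :=
        pow_le_pow_of_le_one hp0.le hp1.le (by omega)
      have h2 : (1 : ℝ) ≤ UU q b N := one_le_UU hq0.le b N
      have h3 : (0 : ℝ) < p ^ (N + 1) := pow_pos hp0 _
      nlinarith
    · obtain ⟨M, rfl⟩ : ∃ M, N = L + M + 1 := ⟨N - L - 1, by omega⟩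
      have hres := UU_restrict hq0.le b L M
      have hlow' := hlow M
      have hUU0 : (0 : ℝ) ≤ UU q b' M := le_trans (by norm_num) (one_le_UU hq0.le b' M)
      have hsplit : p ^ (L + M + 1 + 1) = p ^ (L + 1) * p ^ (M + 1) := by
        rw [← pow_add]
        congr 1
        omega
      have hpL : (0 : ℝ) < p ^ (L + 1) := pow_pos hp0 _
      have hpM : (0 : ℝ) < p ^ (M + 1) := pow_pos hp0 _
      calc (1 : ℝ) / 2 * p ^ (L + 1) ≤ (p ^ (M + 1) * UU q b' M) * p ^ (L + 1) := by
            nlinarith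
        _ = p ^ (L + M + 1 + 1) * UU q b' M := by rw [hsplit]; ring
        _ ≤ p ^ (L + M + 1 + 1) * UU q b (L + M + 1) := by
            apply mul_le_mul_of_nonneg_left _ (by positivity)
            exact hres
  -- conclude
  have hpartial : ∀ N : ℕ,
      ∑ n ∈ range N, (barrierSeqCount b n : ℝ) * p ^ (n + 1) * q ^ (b (n + 1) + 1)
        ≤ (1 - q ^ (b 0 + 1)) - 1 / 2 * p ^ (L + 1) := by
    intro N
    have h1 : ∑ n ∈ range N, (barrierSeqCount b n : ℝ) * p ^ (n + 1) * q ^ (b (n + 1) + 1)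
        = ∑ n ∈ range N, ((admF b n).card : ℝ) * p ^ (n + 1) * q ^ (b (n + 1) + 1) := by
      refine Finset.sum_congr rfl fun n _ => ?_
      rw [card_admF]
    rw [h1, partial_sum hq1.ne hpq hb N]
    linarith [hUlb N]
  have hnn : ∀ n : ℕ, (0 : ℝ) ≤ (barrierSeqCount b n : ℝ) * p ^ (n + 1) * q ^ (b (n + 1) + 1) := by
    intro n
    positivity
  have htsum := Real.tsum_le_of_sum_range_le hnn hpartial
  have hpL : (0 : ℝ) < p ^ (L + 1) := pow_pos hp0 _
  linarith
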